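/- Let κ be a Markov kernel on a measurable space X, and let ν be a κ-invariant probability measure on X (i.e. the composition ν.bind κ equals ν). Let V : X → ℝ be measurable with V(x) ≥ 1 for all x and ∫ V dν < ∞, let λ ∈ (0,1) and c > 0, let C ⊆ X be measurable, and suppose the Foster–Lyapunov drift condition ∫ V(y) κ(x)(dy) ≤ λ·V(x) + c·𝟙_C(x) holds for every x ∈ X. Then ν(C) ≥ (1−λ)·(∫ V dν)/c ≥ (1−λ)/c. -/

import Mathlib

open MeasureTheory ProbabilityTheory
open scoped ENNReal

/-- **Invariant mass of the drift set under a Foster–Lyapunov condition.** Let `κ` be a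
Markov kernel with invariant probability measure `ν`, let `V ≥ 1` be measurable with
`∫ V dν < ∞`, and suppose the drift condition
`∫ V(y) κ(x)(dy) ≤ λ V(x) + c 𝟙_C(x)` holds for every `x`, where `λ ∈ (0,1)`, `c > 0`
and `C` is measurable.  Then `ν(C) ≥ (1−λ)(∫ V dν)/c ≥ (1−λ)/c`. -/
theorem invariant_measure_drift_set_lower_bound
    {X : Type*} [MeasurableSpace X]
    (κ : Kernel X X) [IsMarkovKernel κ]
    (ν : Measure X) [IsProbabilityMeasure ν]
    (hinv : Kernel.Invariant κ ν)
    (V : X → ℝ) (hVmeas : Measurable V) (hV1 : ∀ x, 1 ≤ V x)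
    (hVint : ∫⁻ x, ENNReal.ofReal (V x) ∂ν < ⊤)
    (lam c : ℝ) (hlam0 : 0 < lam) (hlam1 : lam < 1) (hc : 0 < c)
    (C : Set X) (hC : MeasurableSet C)
    (hdrift : ∀ x, ∫⁻ y, ENNReal.ofReal (V y) ∂(κ x) ≤
      ENNReal.ofReal (lam * V x + c * C.indicator (fun _ => (1 : ℝ)) x)) :
    (1 - lam) * (∫⁻ x, ENNReal.ofReal (V x) ∂ν).toReal / c ≤ (ν C).toReal ∧
    (1 - lam) / c ≤ (ν C).toReal := by
  set M : ℝ≥0∞ := ∫⁻ x, ENNReal.ofReal (V x) ∂ν with hM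
  have hmeas : Measurable fun x => ENNReal.ofReal (V x) :=
    ENNReal.measurable_ofReal.comp hVmeas
  -- key inequality via invariance
  have hbind : ∫⁻ x, ∫⁻ y, ENNReal.ofReal (V y) ∂(κ x) ∂ν = M := by
    rw [hM, ← Measure.lintegral_bind (Kernel.measurable κ).aemeasurable hmeas.aemeasurable, hinv.def]
  have hindnn : ∀ x, 0 ≤ C.indicator (fun _ => (1 : ℝ)) x := fun x =>
    Set.indicator_nonneg (fun _ _ => zero_le_one) x
  have hVnn : ∀ x, 0 ≤ V x := fun x => le_trans zero_le_one (hV1 x)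
  have hsplit : ∀ x, ENNReal.ofReal (lam * V x + c * C.indicator (fun _ => (1 : ℝ)) x)
      = ENNReal.ofReal lam * ENNReal.ofReal (V x)
        + ENNReal.ofReal c * C.indicator (fun _ => (1 : ℝ≥0∞)) x := by
    intro x
    rw [ENNReal.ofReal_add (mul_nonneg hlam0.le (hVnn x)) (mul_nonneg hc.le (hindnn x)), ENNReal.ofReal_mul hlam0.le,
      ENNReal.ofReal_mul hc.le]
    congr 1
    by_cases hx : x ∈ C <;> simp [hx]
  have hineq : M ≤ ENNReal.ofReal lam * M + ENNReal.ofReal c * ν C := by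
    calc M = ∫⁻ x, ∫⁻ y, ENNReal.ofReal (V y) ∂(κ x) ∂ν := hbind.symm
    _ ≤ ∫⁻ x, ENNReal.ofReal lam * ENNReal.ofReal (V x)
          + ENNReal.ofReal c * C.indicator (fun _ => (1 : ℝ≥0∞)) x ∂ν := by
        refine lintegral_mono fun x => ?_
        rw [← hsplit x]; exact hdrift x
    _ = ENNReal.ofReal lam * M + ENNReal.ofReal c * ν C := by
        rw [lintegral_add_left ((hmeas.const_mul _)),
          lintegral_const_mul _ hmeas, lintegral_const_mul _ ((measurable_const (a := (1:ℝ≥0∞))).indicator hC),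
          show (fun _ : X => (1:ℝ≥0∞)) = (1 : X → ℝ≥0∞) from rfl, lintegral_indicator_one hC]
  -- pass to reals
  have hMtop : M ≠ ⊤ := hVint.ne
  have hνC : ν C ≠ ⊤ := (measure_lt_top ν C).ne
  have hreal : M.toReal ≤ lam * M.toReal + c * (ν C).toReal := by
    have := ENNReal.toReal_mono (by
      refine ENNReal.add_ne_top.2 ⟨?_, ?_⟩
      · exact ENNReal.mul_ne_top ENNReal.ofReal_ne_top hMtop
      · exact ENNReal.mul_ne_top ENNReal.ofReal_ne_top hνC) hineq
    rwa [ENNReal.toReal_add (ENNReal.mul_ne_top ENNReal.ofReal_ne_top hMtop)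
      (ENNReal.mul_ne_top ENNReal.ofReal_ne_top hνC), ENNReal.toReal_mul, ENNReal.toReal_mul,
      ENNReal.toReal_ofReal hlam0.le, ENNReal.toReal_ofReal hc.le] at this
  have h1 : (1 - lam) * M.toReal ≤ c * (ν C).toReal := by nlinarith
  have hfirst : (1 - lam) * M.toReal / c ≤ (ν C).toReal := by
    rw [div_le_iff₀ hc]; linarith [h1]
  have hM1 : (1 : ℝ) ≤ M.toReal := by
    have : (1 : ℝ≥0∞) ≤ M := by
      calc (1 : ℝ≥0∞) = ∫⁻ _, 1 ∂ν := by simp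
      _ ≤ M := lintegral_mono fun x => by
          simpa using ENNReal.ofReal_le_ofReal (hV1 x)
    calc (1 : ℝ) = (1 : ℝ≥0∞).toReal := by simp
    _ ≤ M.toReal := ENNReal.toReal_mono hMtop this
  refine ⟨hfirst, le_trans ?_ hfirst⟩
  have hl : 0 ≤ 1 - lam := by linarith
  rw [div_le_div_iff_of_pos_right hc]
  nlinarith
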